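/- Let H be a complex Hilbert space, ε > 0, M > 0, K > 0, and let A be a map assigning to each ξ ∈ H a sesquilinear form A(ξ) on H such that: (i) each A(ξ) is bounded with constant M; (ii) each A(ξ) satisfies Im A(ξ)(u, u) ≥ ε‖u‖² for all u ∈ H; (iii) |A(ξ)(u, v) − A(ξ′)(u, v)| ≤ K‖ξ − ξ′‖‖u‖‖v‖ for all ξ, ξ′, u, v ∈ H. Let l be a continuous conjugate-linear functional on H with K‖l‖ < ε². Then there exists a unique ξ ∈ H such that A(ξ)(ξ, v) = l(v) for all v ∈ H. -/

import Mathlib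

/-- small-data existence and uniqueness for the regularized nonlinear
fixed-point problem. `A` assigns to each `ξ ∈ H` a sesquilinear form `A(ξ)` (linear in
the first argument, conjugate-linear in the second) on the complex Hilbert space `H`,
uniformly bounded with constant `M`, with the `ε`-absorption property, and `K`-Lipschitz
in `ξ`. If `l` is a continuous conjugate-linear functional with `K ‖l‖ < ε²`, then there
is a unique `ξ` with `A(ξ)(ξ, v) = l(v)` for all `v`. -/
theorem stmt_6 {H : Type*} [NormedAddCommGroup H] [InnerProductSpace ℂ H]
    [CompleteSpace H] (ε M K : ℝ) (hε : 0 < ε) (hM : 0 < M) (hK : 0 < K)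
    (A : H → H →ₗ[ℂ] H →ₛₗ[starRingEnd ℂ] ℂ)
    (hbdd : ∀ ξ u v : H, ‖A ξ u v‖ ≤ M * ‖u‖ * ‖v‖)
    (habs : ∀ ξ u : H, ε * ‖u‖ ^ 2 ≤ (A ξ u u).im)
    (hlip : ∀ ξ ξ' u v : H, ‖A ξ u v - A ξ' u v‖ ≤ K * ‖ξ - ξ'‖ * ‖u‖ * ‖v‖)
    (l : H →SL[starRingEnd ℂ] ℂ) (hl : K * ‖l‖ < ε ^ 2) :
    ∃! ξ : H, ∀ v : H, A ξ ξ v = l v := by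
  letI : InnerProductSpace ℝ H := InnerProductSpace.complexToReal
  have hsmul : ∀ (r : ℝ) (v : H), r • v = (r : ℂ) • v := fun r v =>
    (Complex.coe_smul r v).symm
  have hl0 : (0:ℝ) ≤ ‖l‖ := norm_nonneg l
  -- existence of the solution of the linear problem for each ξ
  have key : ∀ ξ : H, ∃ u : H, ∀ v, A ξ u v = l v := by
    intro ξ
    set b : H →ₗ[ℝ] H →ₗ[ℝ] ℝ := LinearMap.mk₂ ℝ (fun u v => (A ξ u v).im)
      (fun u u' v => by simp)
      (fun r u v => by rw [hsmul]; simp [Complex.mul_im])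
      (fun u v v' => by simp)
      (fun r u v => by
        rw [hsmul]
        simp only [(A ξ u).map_smulₛₗ]
        simp [Complex.mul_im]) with hb
    set B : H →L[ℝ] H →L[ℝ] ℝ := LinearMap.mkContinuous₂ b M (fun u v => by
      rw [hb]
      simp only [LinearMap.mk₂_apply]
      calc ‖(A ξ u v).im‖ ≤ ‖A ξ u v‖ := by
            rw [Real.norm_eq_abs]; exact Complex.abs_im_le_norm _
        _ ≤ M * ‖u‖ * ‖v‖ := hbdd ξ u v) with hB
    have hBapp : ∀ u v : H, B u v = (A ξ u v).im := fun u v => rfl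
    have coercive : IsCoercive B := by
      refine ⟨ε, hε, fun u => ?_⟩
      rw [hBapp]
      calc ε * ‖u‖ * ‖u‖ = ε * ‖u‖ ^ 2 := by ring
        _ ≤ (A ξ u u).im := habs ξ u
    set f : H →L[ℝ] ℝ := LinearMap.mkContinuous
      { toFun := fun v => (l v).im
        map_add' := fun v v' => by simp
        map_smul' := fun r v => by
          rw [hsmul]
          simp only [l.map_smulₛₗ]
          simp [Complex.mul_im] } ‖l‖ (fun v => by
        calc ‖(l v).im‖ ≤ ‖l v‖ := by
              rw [Real.norm_eq_abs]; exact Complex.abs_im_le_norm _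
          _ ≤ ‖l‖ * ‖v‖ := l.le_opNorm v) with hf
    have hfapp : ∀ v : H, f v = (l v).im := fun v => rfl
    set z : H := (InnerProductSpace.toDual ℝ H).symm f with hz
    refine ⟨coercive.continuousLinearEquivOfBilin.symm z, fun v => ?_⟩
    set u : H := coercive.continuousLinearEquivOfBilin.symm z with hu
    have him : ∀ w : H, (A ξ u w).im = (l w).im := by
      intro w
      have h1 : B u w = inner ℝ z w := by
        rw [← coercive.continuousLinearEquivOfBilin_apply u w, hu,
          ContinuousLinearEquiv.apply_symm_apply]
      have h2 : (inner ℝ z w : ℝ) = f w := InnerProductSpace.toDual_symm_apply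
      rw [← hBapp, ← hfapp, h1, h2]
    apply Complex.ext
    · have h3 := him (Complex.I • v)
      have e1 : A ξ u (Complex.I • v) = -Complex.I * A ξ u v := by
        rw [(A ξ u).map_smulₛₗ]
        simp [Complex.conj_I]
      have e2 : l (Complex.I • v) = -Complex.I * l v := by
        rw [l.map_smulₛₗ]
        simp [Complex.conj_I]
      rw [e1, e2] at h3
      simpa [Complex.mul_im] using h3
    · exact him v
  -- any solution of the linear problem is bounded by ‖l‖/ε
  have hsolb : ∀ (ξ u : H), (∀ v, A ξ u v = l v) → ‖u‖ ≤ ‖l‖ / ε := by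
    intro ξ u hsol
    have h1 : ε * ‖u‖ ^ 2 ≤ ‖l‖ * ‖u‖ := by
      calc ε * ‖u‖ ^ 2 ≤ (A ξ u u).im := habs ξ u
        _ = (l u).im := by rw [hsol u]
        _ ≤ ‖l u‖ := by
            exact (le_abs_self _).trans (Complex.abs_im_le_norm _)
        _ ≤ ‖l‖ * ‖u‖ := l.le_opNorm u
    rw [le_div_iff₀ hε]
    rcases eq_or_lt_of_le (norm_nonneg u) with h | h
    · rw [← h]; simpa using hl0
    · have := (mul_le_mul_iff_of_pos_right h).mp (by nlinarith : (ε * ‖u‖) * ‖u‖ ≤ ‖l‖ * ‖u‖)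
      linarith [this]
  -- difference estimate
  have hdiff : ∀ (ξ ξ' u u' : H), (∀ v, A ξ u v = l v) → (∀ v, A ξ' u' v = l v) →
      ε * ‖u - u'‖ ^ 2 ≤ K * ‖ξ - ξ'‖ * ‖u'‖ * ‖u - u'‖ := by
    intro ξ ξ' u u' hs hs'
    have e1 : A ξ (u - u') (u - u') = A ξ' u' (u - u') - A ξ u' (u - u') := by
      have e0 : (A ξ) (u - u') = A ξ u - A ξ u' := map_sub _ _ _
      rw [e0, LinearMap.sub_apply, hs, ← hs']
    calc ε * ‖u - u'‖ ^ 2 ≤ (A ξ (u - u') (u - u')).im := habs ξ (u - u')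
      _ ≤ ‖A ξ (u - u') (u - u')‖ := by
          exact (le_abs_self _).trans (Complex.abs_im_le_norm _)
      _ = ‖A ξ' u' (u - u') - A ξ u' (u - u')‖ := by rw [e1]
      _ ≤ K * ‖ξ' - ξ‖ * ‖u'‖ * ‖u - u'‖ := hlip ξ' ξ u' (u - u')
      _ = K * ‖ξ - ξ'‖ * ‖u'‖ * ‖u - u'‖ := by rw [norm_sub_rev]
  -- the solution map
  set T : H → H := fun ξ => (key ξ).choose with hT
  have hTsol : ∀ ξ : H, ∀ v, A ξ (T ξ) v = l v := fun ξ => (key ξ).choose_spec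
  set c : ℝ := K * ‖l‖ / ε ^ 2 with hc
  have hc0 : 0 ≤ c := by positivity
  have hc1 : c < 1 := by rw [hc, div_lt_one (by positivity)]; exact hl
  have hTlip : ∀ ξ ξ' : H, ‖T ξ - T ξ'‖ ≤ c * ‖ξ - ξ'‖ := by
    intro ξ ξ'
    have h1 := hdiff ξ ξ' (T ξ) (T ξ') (hTsol ξ) (hTsol ξ')
    have h2 : ‖T ξ'‖ ≤ ‖l‖ / ε := hsolb ξ' (T ξ') (hTsol ξ')
    set d : H := T ξ - T ξ' with hd
    have h3 : ε * ‖d‖ ^ 2 ≤ K * ‖ξ - ξ'‖ * (‖l‖ / ε) * ‖d‖ := by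
      calc ε * ‖d‖ ^ 2 ≤ K * ‖ξ - ξ'‖ * ‖T ξ'‖ * ‖d‖ := h1
        _ ≤ K * ‖ξ - ξ'‖ * (‖l‖ / ε) * ‖d‖ := by
            apply mul_le_mul_of_nonneg_right _ (norm_nonneg d)
            exact mul_le_mul_of_nonneg_left h2 (by positivity)
    rcases eq_or_lt_of_le (norm_nonneg d) with h | h
    · rw [← h]; positivity
    · have h4 : ε * ‖d‖ ≤ K * ‖ξ - ξ'‖ * (‖l‖ / ε) := by
        have := (mul_le_mul_iff_of_pos_right h).mp (by nlinarith : (ε * ‖d‖) * ‖d‖ ≤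
          (K * ‖ξ - ξ'‖ * (‖l‖ / ε)) * ‖d‖)
        exact this
      rw [hc]
      rw [← le_div_iff₀' hε] at h4
      calc ‖d‖ ≤ K * ‖ξ - ξ'‖ * (‖l‖ / ε) / ε := h4
        _ = K * ‖l‖ / ε ^ 2 * ‖ξ - ξ'‖ := by field_simp
  haveI : Nonempty H := ⟨0⟩
  have hcontr : ContractingWith c.toNNReal T := by
    constructor
    · rw [← NNReal.coe_lt_one, Real.coe_toNNReal c hc0]; exact hc1
    · apply LipschitzWith.of_dist_le_mul
      intro x y
      rw [Real.coe_toNNReal c hc0, dist_eq_norm, dist_eq_norm]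
      exact hTlip x y
  refine ⟨ContractingWith.fixedPoint T hcontr, ?_, ?_⟩
  · intro v
    have hfix := hcontr.fixedPoint_isFixedPt
    have := hTsol (ContractingWith.fixedPoint T hcontr) v
    rwa [hfix.eq] at this
  · intro ξ' hξ'
    set ξ := ContractingWith.fixedPoint T hcontr with hξ
    have hsolξ : ∀ v, A ξ ξ v = l v := by
      intro v
      have hfix := hcontr.fixedPoint_isFixedPt
      have := hTsol ξ v
      rwa [hfix.eq] at this
    have h1 := hdiff ξ' ξ ξ' ξ hξ' hsolξ
    have h2 : ‖ξ‖ ≤ ‖l‖ / ε := hsolb ξ ξ hsolξ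
    have h3 : ‖ξ' - ξ‖ = 0 := by
      by_contra h
      have hpos : 0 < ‖ξ' - ξ‖ := lt_of_le_of_ne (norm_nonneg _) (Ne.symm h)
      have h5 : K * ‖ξ‖ ≤ K * (‖l‖ / ε) := mul_le_mul_of_nonneg_left h2 hK.le
      have h6 : ε * ‖ξ' - ξ‖ ^ 2 ≤ (K * (‖l‖ / ε)) * ‖ξ' - ξ‖ ^ 2 := by
        nlinarith [mul_le_mul_of_nonneg_right h5 (sq_nonneg ‖ξ' - ξ‖)]
      have h7 : ε ≤ K * (‖l‖ / ε) := le_of_mul_le_mul_right h6 (pow_pos hpos 2)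
      have h8 : ε * ε ≤ K * (‖l‖ / ε) * ε := mul_le_mul_of_nonneg_right h7 hε.le
      have h9 : K * (‖l‖ / ε) * ε = K * ‖l‖ := by field_simp
      nlinarith [h8, h9, hl]
    have := norm_sub_eq_zero_iff.mp h3
    exact this
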